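/- Let C be a triangulated category with shift Σ and D a distinguished abelian subcategory of C. If W is an object of D such that Σ(W) also belongs to D, then W is an injective object of the abelian category D and Σ(W) is a projective object of D. -/

import Mathlib

universe v u v' u'

open CategoryTheory Category Limits Pretriangulated

/-- Let `C` be a triangulated category with shift `Σ` and `D` a distinguished
abelian subcategory of `C` (encoded as a fully faithful additive functor `ι : D ⥤ C` from
an abelian category such that every short exact sequence in `D` can be completed to a
distinguished triangle in `C`).  If `W` is an object of `D` such that `Σ(ι W)` also belongs
to `D` (i.e. there is `W'` in `D` with `ι W' ≅ (ι W)⟦1⟧`), then `W` is an injective object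
of `D` and `W'` is a projective object of `D`. -/
theorem stmt18 {C : Type u} [Category.{v} C] [HasZeroObject C] [HasShift C ℤ]
    [Preadditive C] [∀ n : ℤ, (CategoryTheory.shiftFunctor C n).Additive] [Pretriangulated C]
    {D : Type u'} [Category.{v'} D] [Abelian D]
    (ι : D ⥤ C) [ι.Full] [ι.Faithful] [ι.Additive]
    (hdist : ∀ S : ShortComplex D, S.ShortExact →
      ∃ h : ι.obj S.X₃ ⟶ (ι.obj S.X₁)⟦(1 : ℤ)⟧,
        Triangle.mk (ι.map S.f) (ι.map S.g) h ∈ distTriang C)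
    (W W' : D) (eW : ι.obj W' ≅ (ι.obj W)⟦(1 : ℤ)⟧) :
    CategoryTheory.Injective W ∧ CategoryTheory.Projective W' := by
  constructor
  · -- W is injective
    constructor
    intro X Y g f hf
    set S : ShortComplex D := ShortComplex.mk f (cokernel.π f) (cokernel.condition f) with hS
    have hSE : S.ShortExact := by
      refine ShortComplex.ShortExact.mk' (S.exact_of_g_is_cokernel ?_) hf ?_
      · exact cokernelIsCokernel f
      · dsimp [S]; infer_instance
    obtain ⟨h, hT⟩ := hdist S hSE
    set T := Triangle.mk (ι.map S.f) (ι.map S.g) h with hTdef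
    set φ : (ι.obj X)⟦(1:ℤ)⟧ ⟶ ι.obj W' := (ι.map g)⟦(1:ℤ)⟧' ≫ eW.inv with hφ
    have hepi : Epi S.g := hSE.epi_g
    -- h ≫ φ = 0
    have hzero : h ≫ φ = 0 := by
      have h1 : ι.map (S.g ≫ ι.preimage (h ≫ φ)) = 0 := by
        rw [Functor.map_comp, Functor.map_preimage, ← assoc]
        have := comp_distTriang_mor_zero₂₃ T hT
        change ι.map S.g ≫ h = 0 at this
        rw [this, zero_comp]
      have h2 : S.g ≫ ι.preimage (h ≫ φ) = 0 := ι.map_injective (by simpa using h1)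
      have h3 : ι.preimage (h ≫ φ) = 0 := by
        rwa [← cancel_epi S.g, comp_zero]
      rw [← ι.map_preimage (h ≫ φ), h3, Functor.map_zero]
    obtain ⟨χ, hχ⟩ : ∃ χ : (ι.obj Y)⟦(1:ℤ)⟧ ⟶ ι.obj W', φ = T.rotate.mor₃ ≫ χ :=
      Triangle.yoneda_exact₃ T.rotate (rot_of_distTriang T hT) φ hzero
    set k : ι.obj Y ⟶ ι.obj W := (shiftFunctor C (1:ℤ)).preimage (χ ≫ eW.hom) with hk
    refine ⟨-(ι.preimage k), ι.map_injective ?_⟩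
    have h4 : (ι.map f)⟦(1:ℤ)⟧' ≫ χ ≫ eW.hom = (-(ι.map g))⟦(1:ℤ)⟧' := by
      have : T.rotate.mor₃ = -(ι.map f)⟦(1:ℤ)⟧' := rfl
      rw [this] at hχ
      change φ = (-(ι.map f)⟦(1:ℤ)⟧') ≫ χ at hχ
      have h5 : (ι.map f)⟦(1:ℤ)⟧' ≫ χ = -φ := by
        rw [hχ, Preadditive.neg_comp, neg_neg]
      rw [← assoc, h5, Functor.map_neg, hφ, Preadditive.neg_comp, assoc, eW.inv_hom_id, comp_id]
    have h6 : ι.map f ≫ k = -(ι.map g) := by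
      apply (shiftFunctor C (1:ℤ)).map_injective
      rw [Functor.map_comp, hk, Functor.map_preimage]
      exact h4
    rw [Functor.map_comp, Functor.map_neg, Functor.map_preimage, Preadditive.comp_neg, h6,
      neg_neg]
  · -- W' is projective
    constructor
    intro Y Z p g hg
    set S : ShortComplex D := ShortComplex.mk (kernel.ι g) g (kernel.condition g) with hS
    have hSE : S.ShortExact := by
      refine ShortComplex.ShortExact.mk' (S.exact_of_f_is_kernel ?_) ?_ hg
      · exact kernelIsKernel g
      · dsimp [S]; infer_instance
    obtain ⟨h, hT⟩ := hdist S hSE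
    set T := Triangle.mk (ι.map S.f) (ι.map S.g) h with hTdef
    have hzero : ι.map p ≫ h = 0 := by
      set u : ι.obj W ⟶ ι.obj (kernel g) :=
        (shiftFunctor C (1:ℤ)).preimage (eW.inv ≫ ι.map p ≫ h) with hu
      have h1 : (shiftFunctor C (1:ℤ)).map (u ≫ ι.map (kernel.ι g)) = 0 := by
        rw [Functor.map_comp, hu, Functor.map_preimage, assoc, assoc]
        have := comp_distTriang_mor_zero₃₁ T hT
        change h ≫ (ι.map (kernel.ι g))⟦(1:ℤ)⟧' = 0 at this
        rw [this, comp_zero, comp_zero]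
      have h2 : u ≫ ι.map (kernel.ι g) = 0 :=
        (shiftFunctor C (1:ℤ)).map_injective (by simpa using h1)
      have h3 : ι.preimage u ≫ kernel.ι g = 0 := by
        apply ι.map_injective
        rw [Functor.map_comp, Functor.map_preimage]
        simpa using h2
      have h4 : ι.preimage u = 0 := by rwa [← cancel_mono (kernel.ι g), zero_comp]
      have h5 : u = 0 := by rw [← ι.map_preimage u, h4, Functor.map_zero]
      have h6 : eW.inv ≫ ι.map p ≫ h = 0 := by
        rw [← (shiftFunctor C (1:ℤ)).map_preimage (eW.inv ≫ ι.map p ≫ h), ← hu, h5,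
          Functor.map_zero]
      calc ι.map p ≫ h = eW.hom ≫ eW.inv ≫ ι.map p ≫ h := by rw [eW.hom_inv_id_assoc]
        _ = 0 := by rw [h6, comp_zero]
    obtain ⟨χ, hχ⟩ : ∃ χ : ι.obj W' ⟶ ι.obj Y, ι.map p = χ ≫ T.mor₂ :=
      Triangle.coyoneda_exact₃ T hT (ι.map p) hzero
    refine ⟨ι.preimage χ, ι.map_injective ?_⟩
    rw [Functor.map_comp, Functor.map_preimage]
    exact hχ.symm
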